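/- Let K ⊆ ℝ be compact and well-ordered by the reverse usual order with order type ω^ω + 1. Then the derived set K' is compact, well-ordered by the reverse usual order, and also has order type ω^ω + 1. -/

import Mathlib

open Ordinal Filter Topology Set

/-- The `n`-th derived set of `A ⊆ ℝ`. -/
noncomputable def iterDeriv (A : Set ℝ) (n : ℕ) : Set ℝ := (derivedSet (X := ℝ))^[n] A

/-- The ordinal `ω ^ ω`. -/
noncomputable def wOmega : Ordinal.{0} := Ordinal.omega0 ^ Ordinal.omega0

/-- An enumeration of `K ⊆ ℝ` witnessing that `K`, with the reverse of the usual order,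
is well-ordered with order type `ω ^ ω + 1`: its elements are exactly `e α` for
`α ≤ ω ^ ω`, and the enumeration is strictly order-reversing. `e α` is the element
written `K[α]`. -/
structure OrdEnum (K : Set ℝ) where
  e : Ordinal.{0} → ℝ
  mem : ∀ α ≤ wOmega, e α ∈ K
  surj : ∀ x ∈ K, ∃ α ≤ wOmega, e α = x
  anti : ∀ ⦃α β : Ordinal.{0}⦄, α ≤ wOmega → β ≤ wOmega → (α < β ↔ e β < e α)

/-- An enumeration of a set `S ⊆ ℝ` of reverse-order type `ω ^ ω` (indices `α < ω ^ ω`),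
strictly order-reversing; `e α` is the element written `S[α]`. -/
structure SubEnum (S : Set ℝ) where
  e : Ordinal.{0} → ℝ
  mem : ∀ α < wOmega, e α ∈ S
  surj : ∀ x ∈ S, ∃ α < wOmega, e α = x
  anti : ∀ ⦃α β : Ordinal.{0}⦄, α < wOmega → β < wOmega → (α < β ↔ e β < e α)

/-- A self-similar compact set of ratio `ρ > 1` and module `μ ≥ 1`:
a compact `K ⊆ [0, ∞)`, well-ordered by the reverse usual order with order
type `ω ^ ω + 1`, satisfying `ρ • K^(μ) = K`. -/
def SelfSimilar (K : Set ℝ) (ρ : ℝ) (μ : ℕ) : Prop :=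
  IsCompact K ∧ K ⊆ Set.Ici 0 ∧ 1 < ρ ∧ 1 ≤ μ ∧
    (fun x => ρ * x) '' iterDeriv K μ = K ∧ Nonempty (OrdEnum K)

private lemma wOmega_isLimit : Order.IsSuccLimit wOmega := isSuccLimit_opow one_lt_omega0 isSuccLimit_omega0

private lemma omega0_mul_wOmega : omega0 * wOmega = wOmega := by
  rw [wOmega, ← opow_one_add, one_add_omega0]

private lemma one_add_wOmega : (1 : Ordinal) + wOmega = wOmega :=
  one_add_of_omega0_le (left_le_opow _ omega0_pos)

private lemma OrdEnum.mono {K : Set ℝ} (E : OrdEnum K) {α β : Ordinal.{0}}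
    (hα : α ≤ wOmega) (hβ : β ≤ wOmega) (h : α ≤ β) : E.e β ≤ E.e α := by
  rcases h.lt_or_eq with h | rfl
  · exact ((E.anti hα hβ).mp h).le
  · exact le_rfl

private lemma mem_derivedSet_iff_isLimit {K : Set ℝ} (hK : IsCompact K) (E : OrdEnum K)
    {α : Ordinal.{0}} (hα : α ≤ wOmega) : E.e α ∈ derivedSet K ↔ Order.IsSuccLimit α := by
  constructor
  · intro hacc
    rcases Ordinal.zero_or_succ_or_isSuccLimit α with rfl | ⟨γ, rfl⟩ | hlim
    · -- e 0 is the maximum, isolated from the right neighbour e 1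
      exfalso
      have h1 : (1 : Ordinal) ≤ wOmega := Order.one_le_iff_pos.mpr wOmega_isLimit.pos
      rw [mem_derivedSet, accPt_iff_nhds] at hacc
      obtain ⟨y, ⟨hy1, hy2⟩, hy3⟩ := hacc (Set.Ioi (E.e 1))
        (isOpen_Ioi.mem_nhds ((E.anti (by simp) h1).mp zero_lt_one))
      obtain ⟨β, hβ, rfl⟩ := E.surj y hy2
      have : β < 1 := (E.anti hβ h1).mpr hy1
      rw [Ordinal.lt_one_iff_zero] at this
      subst this
      exact hy3 rfl
    · -- successor points are isolated
      exfalso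
      have hγ : γ < wOmega := (Order.lt_succ γ).trans_le hα
      have hsγ : Order.succ γ < wOmega := wOmega_isLimit.succ_lt hγ
      have hssγ : Order.succ (Order.succ γ) ≤ wOmega := wOmega_isLimit.succ_lt hsγ |>.le
      rw [mem_derivedSet, accPt_iff_nhds] at hacc
      obtain ⟨y, ⟨hy1, hy2⟩, hy3⟩ := hacc (Set.Ioo (E.e (Order.succ (Order.succ γ))) (E.e γ))
        (isOpen_Ioo.mem_nhds ⟨(E.anti hα hssγ).mp (Order.lt_succ _),
          (E.anti hγ.le hα).mp (Order.lt_succ _)⟩)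
      obtain ⟨β, hβ, rfl⟩ := E.surj y hy2
      have h1 : γ < β := (E.anti hγ.le hβ).mpr hy1.2
      have h2 : β < Order.succ (Order.succ γ) := (E.anti hβ hssγ).mpr hy1.1
      have : β = Order.succ γ := le_antisymm (Order.lt_succ_iff.mp h2) (Order.succ_le_of_lt h1)
      subst this
      exact hy3 rfl
    · exact hlim
  · intro hlim
    -- `E.e α` is the infimum of the earlier points, which accumulate to it
    set S : Set ℝ := E.e '' Set.Iio α with hS
    have hSne : S.Nonempty := ⟨E.e 0, 0, hlim.pos, rfl⟩
    have hlbd : ∀ y ∈ S, E.e α ≤ y := by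
      rintro y ⟨β, hβ, rfl⟩
      exact ((E.anti (hβ.le.trans hα) hα).mp hβ).le
    have hbdd : BddBelow S := ⟨E.e α, hlbd⟩
    have hSK : S ⊆ K := by
      rintro y ⟨β, hβ, rfl⟩
      exact E.mem β (hβ.le.trans hα)
    have hcK : sInf S ∈ K :=
      hK.isClosed.closure_subset_iff.mpr hSK (csInf_mem_closure hSne hbdd)
    have hce : sInf S = E.e α := by
      obtain ⟨γ, hγ, hγe⟩ := E.surj _ hcK
      refine le_antisymm ?_ (le_csInf hSne hlbd)
      rcases lt_or_ge γ α with h | h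
      · exfalso
        have h1 : Order.succ γ < α := hlim.succ_lt h
        have h2 : sInf S ≤ E.e (Order.succ γ) := csInf_le hbdd ⟨_, h1, rfl⟩
        have h3 : E.e (Order.succ γ) < E.e γ :=
          (E.anti (h.le.trans hα) ((h1.le.trans hα))).mp (Order.lt_succ γ)
        rw [← hγe] at h2
        exact absurd (h2.trans_lt h3) (lt_irrefl _)
      · rw [← hγe]
        exact E.mono hα hγ h
    rw [mem_derivedSet, accPt_iff_nhds]
    intro U hU
    obtain ⟨ε, hε, hball⟩ := Metric.mem_nhds_iff.mp hU
    have : sInf S < sInf S + ε := by linarith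
    obtain ⟨y, hyS, hy⟩ := exists_lt_of_csInf_lt hSne this
    obtain ⟨β, hβ, rfl⟩ := hyS
    have h1 : E.e α < E.e β := (E.anti (hβ.le.trans hα) hα).mp hβ
    refine ⟨E.e β, ⟨hball ?_, hSK ⟨β, hβ, rfl⟩⟩, ne_of_gt h1⟩
    rw [Metric.mem_ball, Real.dist_eq, abs_sub_lt_iff]
    rw [hce] at hy
    constructor <;> linarith

theorem derivedSet_compact_ordEnum (K : Set ℝ) (hK : IsCompact K) (E : OrdEnum K) :
    IsCompact (derivedSet K) ∧ Nonempty (OrdEnum (derivedSet K)) := by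
  have hsub : derivedSet K ⊆ K := (isClosed_iff_derivedSet_subset K).mp hK.isClosed
  have hcomp : IsCompact (derivedSet K) :=
    hK.of_isClosed_subset (isClosed_derivedSet K) hsub
  refine ⟨hcomp, ⟨?_⟩⟩
  -- index transform
  have hidx : ∀ δ ≤ wOmega, omega0 * (1 + δ) ≤ wOmega := by
    intro δ hδ
    have h1 : (1 : Ordinal) + δ ≤ wOmega := by
      calc (1 : Ordinal) + δ ≤ 1 + wOmega := add_le_add_right hδ 1
      _ = wOmega := one_add_wOmega
    calc omega0 * (1 + δ) ≤ omega0 * wOmega := mul_le_mul_right h1 _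
    _ = wOmega := omega0_mul_wOmega
  have hlim : ∀ δ : Ordinal.{0}, Order.IsSuccLimit (omega0 * (1 + δ)) := fun δ =>
    isSuccLimit_mul_left isSuccLimit_omega0 (lt_of_lt_of_le zero_lt_one (CanonicallyOrderedAdd.le_self_add 1 δ))
  have hmono : ∀ ⦃δ δ' : Ordinal.{0}⦄, δ < δ' ↔ omega0 * (1 + δ) < omega0 * (1 + δ') := by
    intro δ δ'
    rw [mul_lt_mul_iff_right₀ omega0_pos, add_lt_add_iff_left]
  refine ⟨fun δ => E.e (omega0 * (1 + δ)), ?_, ?_, ?_⟩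
  · intro δ hδ
    exact (mem_derivedSet_iff_isLimit hK E (hidx δ hδ)).mpr (hlim δ)
  · intro x hx
    obtain ⟨α, hα, rfl⟩ := E.surj x (hsub hx)
    have hαlim : Order.IsSuccLimit α := (mem_derivedSet_iff_isLimit hK E hα).mp hx
    obtain ⟨hα0, γ, hγ⟩ := isSuccLimit_iff_omega0_dvd.mp hαlim
    have hγ0 : (1 : Ordinal) ≤ γ := by
      rw [Ordinal.one_le_iff_ne_zero]
      rintro rfl
      exact hα0 (by simpa using hγ)
    have hγW : γ ≤ wOmega := by
      by_contra h
      push_neg at h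
      have : omega0 * wOmega < omega0 * γ := (mul_lt_mul_iff_right₀ omega0_pos).mpr h
      rw [omega0_mul_wOmega, ← hγ] at this
      exact absurd (this.trans_le hα) (lt_irrefl _)
    refine ⟨γ - 1, ?_, ?_⟩
    · calc γ - 1 ≤ 1 + (γ - 1) := CanonicallyOrderedAdd.le_add_self _ 1
      _ = γ := Ordinal.add_sub_cancel_of_le hγ0
      _ ≤ wOmega := hγW
    · show E.e (omega0 * (1 + (γ - 1))) = E.e α
      rw [Ordinal.add_sub_cancel_of_le hγ0, ← hγ]
  · intro δ δ' hδ hδ'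
    rw [← E.anti (hidx δ hδ) (hidx δ' hδ')]
    exact @hmono δ δ'
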